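/- For every integer r ≥ 2 and every integer ℓ ≥ 1, the r-colour discrepancy of the family of all subtrees of the star S_ℓ with ℓ leaves equals (r-1)·⌈ℓ/r⌉. -/

import Mathlib

open SimpleGraph

namespace StarDisc

def phi (ℓ : ℕ) (i : Fin ℓ) : Sym2 (Unit ⊕ Fin ℓ) := s(Sum.inl (), Sum.inr i)

lemma phi_inj {ℓ : ℕ} : Function.Injective (phi ℓ) := by
  intro a b h
  simp only [phi, Sym2.eq, Sym2.rel_iff', Prod.mk.injEq, Prod.swap_prod_mk] at h
  rcases h with ⟨-, h⟩ | ⟨h, -⟩ <;> simp_all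

lemma mem_edgeSet_iff {ℓ : ℕ} {e : Sym2 (Unit ⊕ Fin ℓ)} :
    e ∈ (completeBipartiteGraph Unit (Fin ℓ)).edgeSet ↔ ∃ i, e = phi ℓ i := by
  induction e using Sym2.ind with
  | _ x y =>
    cases x <;> cases y <;>
      simp [phi, Sym2.eq, Sym2.rel_iff', Sym2.eq_swap]

def starSub (ℓ : ℕ) (P : Fin ℓ → Prop) : (completeBipartiteGraph Unit (Fin ℓ)).Subgraph where
  verts := {Sum.inl ()} ∪ (Sum.inr '' {i | P i})
  Adj x y := (∃ i, P i ∧ x = Sum.inl () ∧ y = Sum.inr i) ∨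
    (∃ i, P i ∧ y = Sum.inl () ∧ x = Sum.inr i)
  adj_sub := by rintro x y (⟨i, -, rfl, rfl⟩ | ⟨i, -, rfl, rfl⟩) <;> simp
  edge_vert := by
    rintro x y (⟨i, hi, rfl, rfl⟩ | ⟨i, hi, rfl, rfl⟩)
    · left; rfl
    · right; exact ⟨i, hi, rfl⟩
  symm := by
    constructor
    rintro x y (⟨i, hi, rfl, rfl⟩ | ⟨i, hi, rfl, rfl⟩)
    exacts [Or.inr ⟨i, hi, rfl, rfl⟩, Or.inl ⟨i, hi, rfl, rfl⟩]

lemma starSub_connected {ℓ : ℕ} (P : Fin ℓ → Prop) : (starSub ℓ P).Connected := by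
  rw [Subgraph.connected_iff]
  refine ⟨⟨fun u v => ?_⟩, ⟨Sum.inl (), Or.inl rfl⟩⟩
  have key : ∀ w : (starSub ℓ P).verts,
      (starSub ℓ P).coe.Reachable w ⟨Sum.inl (), Or.inl rfl⟩ := by
    rintro ⟨x, hx⟩
    rcases hx with hx | ⟨i, hi, rfl⟩
    · subst hx; rfl
    · exact (SimpleGraph.Adj.reachable (by exact Or.inr ⟨i, hi, rfl, rfl⟩))
  exact (key u).trans (key v).symm

lemma starSub_edgeSet {ℓ : ℕ} (P : Fin ℓ → Prop) :
    (starSub ℓ P).edgeSet = phi ℓ '' {i | P i} := by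
  ext e
  induction e using Sym2.ind with
  | _ x y =>
    simp only [Subgraph.mem_edgeSet, starSub, Set.mem_image, Set.mem_setOf_eq, phi]
    constructor
    · rintro (⟨i, hi, rfl, rfl⟩ | ⟨i, hi, rfl, rfl⟩)
      · exact ⟨i, hi, rfl⟩
      · exact ⟨i, hi, Sym2.eq_swap⟩
    · rintro ⟨i, hi, h⟩
      rw [Sym2.eq, Sym2.rel_iff'] at h
      rcases h with h | h
      · simp only [Prod.mk.injEq] at h
        exact Or.inl ⟨i, hi, h.1.symm, h.2.symm⟩
      · simp only [Prod.swap_prod_mk, Prod.mk.injEq] at h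
        exact Or.inr ⟨i, hi, h.1.symm, h.2.symm⟩

lemma fiber_ncard_le {r ℓ : ℕ} (hr : 2 ≤ r) (hℓ : 1 ≤ ℓ) (v : ℕ) :
    ({i : Fin ℓ | (i : ℕ) % r = v}).ncard ≤ (ℓ - 1) / r + 1 := by
  classical
  have h := Set.ncard_le_ncard_of_injOn (fun i : Fin ℓ => (i : ℕ) / r)
    (t := ↑(Finset.range ((ℓ - 1) / r + 1)))
    (fun i hi => by
      simp only [Finset.coe_range, Set.mem_Iio]
      have hi' : (i : ℕ) ≤ ℓ - 1 := Nat.le_sub_one_of_lt i.isLt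
      exact lt_of_le_of_lt (Nat.div_le_div_right hi') (Nat.lt_succ_self _))
    (by
      intro a ha b hb hab
      have ha' : (a : ℕ) % r = v := ha
      have hb' : (b : ℕ) % r = v := hb
      have : (a : ℕ) = (b : ℕ) := by
        conv_lhs => rw [← Nat.div_add_mod (a : ℕ) r]
        conv_rhs => rw [← Nat.div_add_mod (b : ℕ) r]
        have hab' : (a : ℕ) / r = (b : ℕ) / r := hab
        rw [hab', ha', hb']
      exact Fin.ext this)
    (Finset.finite_toSet _)
  calc ({i : Fin ℓ | (i : ℕ) % r = v}).ncard
      ≤ (↑(Finset.range ((ℓ - 1) / r + 1)) : Set ℕ).ncard := h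
    _ = (ℓ - 1) / r + 1 := by rw [Set.ncard_coe_finset, Finset.card_range]

lemma ceil_eq {r ℓ : ℕ} (hr : 2 ≤ r) (hℓ : 1 ≤ ℓ) :
    (⌈(ℓ : ℚ) / r⌉ : ℤ) = ((ℓ - 1) / r + 1 : ℕ) := by
  have hr0' : 0 < r := by omega
  have hr0 : (0 : ℚ) < r := by exact_mod_cast hr0'
  set q := (ℓ - 1) / r with hq
  have hle : r * q ≤ ℓ - 1 := Nat.mul_div_le _ _
  have hlt : ℓ ≤ r * q + r := by
    have h1 := Nat.div_add_mod (ℓ - 1) r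
    have h2 := Nat.mod_lt (ℓ - 1) hr0'
    rw [← hq] at h1
    have h3 : ℓ - 1 + 1 = ℓ := by omega
    linarith
  have hleQ : (r : ℚ) * q ≤ (ℓ : ℚ) - 1 := by
    have : ((r * q : ℕ) : ℚ) ≤ ((ℓ - 1 : ℕ) : ℚ) := by exact_mod_cast hle
    rw [Nat.cast_sub hℓ] at this
    push_cast at this
    linarith
  have hltQ : (ℓ : ℚ) ≤ (r : ℚ) * q + r := by exact_mod_cast hlt
  rw [Int.ceil_eq_iff]
  constructor
  · have hlow : (q : ℚ) < (ℓ : ℚ) / r := by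
      rw [lt_div_iff₀ hr0]
      nlinarith
    push_cast
    linarith
  · rw [div_le_iff₀ hr0]
    push_cast
    nlinarith

lemma pigeonhole {r ℓ : ℕ} (hr : 2 ≤ r) (hℓ : 1 ≤ ℓ) (g : Fin ℓ → Fin r) :
    ∃ j : Fin r, (ℓ - 1) / r + 1 ≤ ({i | g i = j} : Set (Fin ℓ)).ncard := by
  classical
  by_contra h
  push_neg at h
  have hsum : (Finset.univ : Finset (Fin ℓ)).card
      = ∑ j : Fin r, (Finset.univ.filter fun i => g i = j).card :=
    Finset.card_eq_sum_card_fiberwise (fun i _ => Finset.mem_univ (g i))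
  have hcard : ∀ j, (Finset.univ.filter fun i => g i = j).card
      = ({i | g i = j} : Set (Fin ℓ)).ncard := by
    intro j
    rw [Set.ncard_eq_toFinset_card']
    congr 1
    ext i
    simp
  have hub : ∀ j : Fin r, (Finset.univ.filter fun i => g i = j).card ≤ (ℓ - 1) / r := by
    intro j
    rw [hcard]
    have := h j
    omega
  have : ℓ ≤ r * ((ℓ - 1) / r) := by
    calc ℓ = (Finset.univ : Finset (Fin ℓ)).card := by simp
    _ = ∑ j : Fin r, (Finset.univ.filter fun i => g i = j).card := hsum
    _ ≤ ∑ _j : Fin r, (ℓ - 1) / r := Finset.sum_le_sum fun j _ => hub j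
    _ = r * ((ℓ - 1) / r) := by simp [mul_comm]
  have h2 : r * ((ℓ - 1) / r) ≤ ℓ - 1 := Nat.mul_div_le _ _
  omega

def gcol (r ℓ : ℕ) (hr : 0 < r) : Unit ⊕ Fin ℓ → Fin r
  | Sum.inl _ => ⟨0, hr⟩
  | Sum.inr i => ⟨(i : ℕ) % r, Nat.mod_lt _ hr⟩

def fcol (r ℓ : ℕ) (hr : 0 < r) : Sym2 (Unit ⊕ Fin ℓ) → Fin r :=
  Sym2.lift ⟨fun x y => ⟨((gcol r ℓ hr x : ℕ) + (gcol r ℓ hr y : ℕ)) % r, Nat.mod_lt _ hr⟩,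
    by intro x y; simp [Nat.add_comm]⟩

lemma fcol_phi (r ℓ : ℕ) (hr : 0 < r) (i : Fin ℓ) :
    fcol r ℓ hr (phi ℓ i) = ⟨(i : ℕ) % r, Nat.mod_lt _ hr⟩ := by
  apply Fin.ext
  simp [fcol, phi, gcol, Nat.mod_mod_of_dvd _ dvd_rfl]

lemma upper {r ℓ : ℕ} (hr : 2 ≤ r) (hℓ : 1 ≤ ℓ) (hrpos : 0 < r)
    (S : (completeBipartiteGraph Unit (Fin ℓ)).Subgraph) (j : Fin r) :
    (r : ℤ) * (({e ∈ S.edgeSet | fcol r ℓ hrpos e = j} : Set (Sym2 (Unit ⊕ Fin ℓ))).ncard : ℤ)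
        - (S.edgeSet.ncard : ℤ) ≤ ((r : ℤ) - 1) * (((ℓ - 1) / r + 1 : ℕ) : ℤ) := by
  classical
  set Ej := {e ∈ S.edgeSet | fcol r ℓ hrpos e = j} with hEj
  have hsub1 : Ej ⊆ S.edgeSet := fun e he => he.1
  have h1 : Ej.ncard ≤ S.edgeSet.ncard := Set.ncard_le_ncard hsub1 (Set.toFinite _)
  have hsub2 : Ej ⊆ phi ℓ '' {i | (i : ℕ) % r = (j : ℕ)} := by
    rintro e ⟨heS, hef⟩
    obtain ⟨i, rfl⟩ := mem_edgeSet_iff.1 (S.edgeSet_subset heS)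
    refine ⟨i, ?_, rfl⟩
    rw [fcol_phi] at hef
    exact congrArg Fin.val hef
  have h2 : Ej.ncard ≤ (ℓ - 1) / r + 1 := by
    calc Ej.ncard ≤ (phi ℓ '' {i | (i : ℕ) % r = (j : ℕ)}).ncard :=
          Set.ncard_le_ncard hsub2 (Set.toFinite _)
      _ = ({i : Fin ℓ | (i : ℕ) % r = (j : ℕ)}).ncard :=
          Set.ncard_image_of_injective _ phi_inj
      _ ≤ (ℓ - 1) / r + 1 := fiber_ncard_le hr hℓ _
  have e1 : (Ej.ncard : ℤ) ≤ (S.edgeSet.ncard : ℤ) := by exact_mod_cast h1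
  have e2 : (Ej.ncard : ℤ) ≤ (((ℓ - 1) / r + 1 : ℕ) : ℤ) := by exact_mod_cast h2
  have hr2 : (2 : ℤ) ≤ (r : ℤ) := by exact_mod_cast hr
  nlinarith [mul_le_mul_of_nonneg_left e2 (show (0 : ℤ) ≤ (r : ℤ) - 1 by linarith)]

lemma lower {r ℓ : ℕ} (hr : 2 ≤ r) (hℓ : 1 ≤ ℓ) (f : Sym2 (Unit ⊕ Fin ℓ) → Fin r) :
    ∃ S : (completeBipartiteGraph Unit (Fin ℓ)).Subgraph, S.Connected ∧ ∃ j : Fin r,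
      ((r : ℤ) - 1) * (((ℓ - 1) / r + 1 : ℕ) : ℤ) ≤
        (r : ℤ) * (({e ∈ S.edgeSet | f e = j} : Set (Sym2 (Unit ⊕ Fin ℓ))).ncard : ℤ)
          - (S.edgeSet.ncard : ℤ) := by
  classical
  obtain ⟨j, hj⟩ := pigeonhole hr hℓ (fun i => f (phi ℓ i))
  refine ⟨starSub ℓ (fun i => f (phi ℓ i) = j), starSub_connected _, j, ?_⟩
  have hE : (starSub ℓ (fun i => f (phi ℓ i) = j)).edgeSet
      = phi ℓ '' {i | f (phi ℓ i) = j} := starSub_edgeSet _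
  have hEq : {e ∈ (starSub ℓ (fun i => f (phi ℓ i) = j)).edgeSet | f e = j}
      = (starSub ℓ (fun i => f (phi ℓ i) = j)).edgeSet := by
    apply Set.eq_of_subset_of_subset (fun e he => he.1)
    intro e he
    refine ⟨he, ?_⟩
    rw [hE] at he
    obtain ⟨i, hi, rfl⟩ := he
    exact hi
  have hN : (starSub ℓ (fun i => f (phi ℓ i) = j)).edgeSet.ncard
      = ({i | f (phi ℓ i) = j} : Set (Fin ℓ)).ncard := by
    rw [hE, Set.ncard_image_of_injective _ phi_inj]
  rw [hEq, hN]
  have hcN : ((((ℓ - 1) / r + 1 : ℕ)) : ℤ) ≤ (({i | f (phi ℓ i) = j} : Set (Fin ℓ)).ncard : ℤ) := by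
    exact_mod_cast hj
  have hr2 : (2 : ℤ) ≤ (r : ℤ) := by exact_mod_cast hr
  nlinarith [mul_le_mul_of_nonneg_left hcN (show (0 : ℤ) ≤ (r : ℤ) - 1 by linarith)]

end StarDisc

/-- **Multicolour discrepancy of subtrees of a star.**
For every `r ≥ 2` and `ℓ ≥ 1`, the `r`-colour discrepancy of the family of all subtrees of
the star `S_ℓ` with `ℓ` leaves equals `(r-1)·⌈ℓ/r⌉`: there is an `r`-colouring of the edges
all of whose subtrees have all colour imbalances at most `(r-1)·⌈ℓ/r⌉`, and every
`r`-colouring admits a subtree and a colour with imbalance at least `(r-1)·⌈ℓ/r⌉`. -/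
theorem star_discrepancy_eq (r ℓ : ℕ) (hr : 2 ≤ r) (hℓ : 1 ≤ ℓ) :
    (∃ f : Sym2 (Unit ⊕ Fin ℓ) → Fin r,
      ∀ S : (completeBipartiteGraph Unit (Fin ℓ)).Subgraph, S.Connected → ∀ j : Fin r,
        (r : ℤ) * ({e ∈ S.edgeSet | f e = j} : Set (Sym2 (Unit ⊕ Fin ℓ))).ncard
            - (S.edgeSet.ncard : ℤ) ≤ ((r : ℤ) - 1) * (⌈(ℓ : ℚ) / r⌉ : ℤ)) ∧
    (∀ f : Sym2 (Unit ⊕ Fin ℓ) → Fin r,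
      ∃ S : (completeBipartiteGraph Unit (Fin ℓ)).Subgraph, S.Connected ∧ ∃ j : Fin r,
        ((r : ℤ) - 1) * (⌈(ℓ : ℚ) / r⌉ : ℤ) ≤
          (r : ℤ) * ({e ∈ S.edgeSet | f e = j} : Set (Sym2 (Unit ⊕ Fin ℓ))).ncard
            - (S.edgeSet.ncard : ℤ)) := by
  have hceil := StarDisc.ceil_eq (r := r) (ℓ := ℓ) hr hℓ
  rw [hceil]
  constructor
  · exact ⟨StarDisc.fcol r ℓ (by omega), fun S _ j => StarDisc.upper hr hℓ (by omega) S j⟩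
  · exact fun f => StarDisc.lower hr hℓ f
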